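/- For any prime p and any integer k with 0 ≤ k ≤ p-1, the Gaussian binomial coefficient [p-1 choose k]_q satisfies [p-1 choose k]_q · q^{C(k+1,2)} ≡ (-1)^k (mod [p]_q) in ℤ[q], where C(k+1,2) = k(k+1)/2. -/

import Mathlib

open Polynomial Finset

/-- The q-integer `[n]_q = 1 + q + ⋯ + q^{n-1}` as a polynomial in `ℤ[q]`. -/
noncomputable def qint (n : ℕ) : Polynomial ℤ := ∑ i ∈ Finset.range n, X ^ i

/-- The q-factorial `[n]_q! = [n]_q [n-1]_q ⋯ [1]_q`. -/
noncomputable def qfact : ℕ → Polynomial ℤ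
  | 0 => 1
  | n + 1 => qint (n + 1) * qfact n

/-- The Gaussian (q-)binomial coefficient `[n choose k]_q` as a polynomial in `ℤ[q]`,
defined by the q-Pascal recurrence; it equals `∏_{i=1}^k (1-q^{n-i+1})/(1-q^i)` for
`0 ≤ k ≤ n` and `0` otherwise. -/
noncomputable def qbinom : ℕ → ℕ → Polynomial ℤ
  | _, 0 => 1
  | 0, _ + 1 => 0
  | n + 1, k + 1 => qbinom n k + X ^ (k + 1) * qbinom n (k + 1)

lemma qbinom_zero : ∀ n : ℕ, qbinom n 0 = 1
  | 0 => rfl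
  | _ + 1 => rfl

lemma qbinom_eq_zero : ∀ n k : ℕ, n < k → qbinom n k = 0
  | _, 0, h => absurd h (Nat.not_lt_zero _)
  | 0, k + 1, _ => rfl
  | n + 1, k + 1, h => by
    rw [qbinom, qbinom_eq_zero n k (by omega), qbinom_eq_zero n (k + 1) (by omega)]
    ring

lemma qbinom_one : ∀ n : ℕ, qbinom n 1 = qint n
  | 0 => by simp [qbinom, qint]
  | n + 1 => by
    rw [qbinom, qbinom_one n, qbinom_zero, qint, qint, geom_sum_succ]
    ring

/-- The symmetric q-Pascal identity. -/
lemma qbinom_pascal2 : ∀ n k : ℕ, k ≤ n →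
    qbinom (n + 1) (k + 1) = qbinom n (k + 1) + X ^ (n - k) * qbinom n k
  | 0, 0, _ => by simp [qbinom]
  | n + 1, 0, _ => by
    have a2 : qint (n + 2) = X ^ (n + 1) + qint (n + 1) := by
      rw [qint, qint, geom_sum_succ']
    rw [Nat.sub_zero, qbinom_one, qbinom_zero, qbinom_one]
    linear_combination a2
  | 0, k + 1, h => by omega
  | n + 1, k + 1, h => by
    have hkn : k ≤ n := by omega
    rcases Nat.lt_or_ge k n with hlt | hge
    · have e0 : qbinom (n + 1) (k + 1) = qbinom n k + X ^ (k + 1) * qbinom n (k + 1) := by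
        rw [qbinom]
      have e3 : qbinom (n + 1) (k + 2) = qbinom n (k + 1) + X ^ (k + 2) * qbinom n (k + 2) := by
        rw [qbinom]
      have edef : qbinom (n + 2) (k + 2) =
          qbinom (n + 1) (k + 1) + X ^ (k + 2) * qbinom (n + 1) (k + 2) := by
        rw [qbinom]
      have e1 := qbinom_pascal2 n k hkn
      have e2 := qbinom_pascal2 n (k + 1) hlt
      have h3 : (X : Polynomial ℤ) ^ (n - k) = X ^ (n - (k + 1)) * X := by
        rw [← pow_succ]; congr 1; omega
      rw [h3] at e1
      have r1 : qbinom n k * (1 - X ^ (n - (k + 1)) * X)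
          = qbinom n (k + 1) * (1 - X ^ (k + 1)) := by
        linear_combination e1 - e0
      have hx2 : n + 1 - (k + 1) = n - k := by omega
      rw [hx2, h3, edef]
      linear_combination e0 - (X ^ (n - (k + 1)) * X) * e1 + (X * X ^ (k + 1)) * e2 - e3
        + (1 + X ^ (n - (k + 1)) * X) * r1
    · have hkn' : k = n := by omega
      subst hkn'
      rw [qbinom, qbinom, qbinom_eq_zero k (k + 1) (by omega),
        qbinom_eq_zero (k + 1) (k + 1 + 1) (by omega)]
      simp

/-- The ratio identity. -/
lemma qbinom_ratio (n k : ℕ) (h : k < n) :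
    (1 - X ^ (n - k)) * qbinom n k = (1 - X ^ (k + 1)) * qbinom n (k + 1) := by
  have e0 : qbinom (n + 1) (k + 1) = qbinom n k + X ^ (k + 1) * qbinom n (k + 1) := by
    rw [qbinom]
  have e2 := qbinom_pascal2 n k h.le
  linear_combination e2 - e0

/-- for a prime `p` and `0 ≤ k ≤ p-1`,
`[p]_q` divides `[p-1 choose k]_q q^{k(k+1)/2} - (-1)^k` in `ℤ[q]`. -/
theorem stmt8 (p k : ℕ) (hp : p.Prime) (hk : k ≤ p - 1) :
    qint p ∣ qbinom (p - 1) k * X ^ ((k + 1).choose 2) - (-1) ^ k := by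
  have hp2 : 2 ≤ p := hp.two_le
  haveI : Fact p.Prime := ⟨hp⟩
  set ζ : ℂ := Complex.exp (2 * Real.pi * Complex.I / p) with hζdef
  have hζ : IsPrimitiveRoot ζ p := Complex.isPrimitiveRoot_exp p hp.ne_zero
  have hq : qint p = cyclotomic p ℤ := by
    rw [cyclotomic_prime ℤ p, qint]
  have hmin : cyclotomic p ℤ = minpoly ℤ ζ := cyclotomic_eq_minpoly hζ hp.pos
  suffices hzero : aeval ζ (qbinom (p - 1) k * X ^ ((k + 1).choose 2) - (-1) ^ k) = 0 by
    rw [hq, hmin]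
    exact minpoly.isIntegrallyClosed_dvd (hζ.isIntegral hp.pos) hzero
  have key : ∀ j, j ≤ p - 1 →
      aeval ζ (qbinom (p - 1) j) * ζ ^ ((j + 1).choose 2) = (-1) ^ j := by
    intro j
    induction j with
    | zero => intro _; simp [qbinom_zero]
    | succ j ih =>
      intro hj
      have hjp : j < p - 1 := by omega
      have hratio := qbinom_ratio (p - 1) j hjp
      have hb := congrArg (aeval ζ) hratio
      simp only [map_mul, map_sub, map_one, map_pow, aeval_X] at hb
      set bj := aeval ζ (qbinom (p - 1) j) with hbj
      set bj1 := aeval ζ (qbinom (p - 1) (j + 1)) with hbj1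
      -- ζ^(j+1) * ζ^(p-1-j) = ζ^p = 1
      have hpow : ζ ^ (j + 1) * ζ ^ (p - 1 - j) = 1 := by
        rw [← pow_add, show j + 1 + (p - 1 - j) = p by omega, hζ.pow_eq_one]
      have hne : ζ ^ (j + 1) ≠ 1 := hζ.pow_ne_one_of_pos_of_lt (by omega) (by omega)
      -- (1 - ζ^(j+1)) * (bj + ζ^(j+1) * bj1) = 0
      have hmain : bj + ζ ^ (j + 1) * bj1 = 0 := by
        have hfac : (1 - ζ ^ (j + 1)) * (bj + ζ ^ (j + 1) * bj1) = 0 := by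
          linear_combination -(ζ ^ (j + 1)) * hb - bj * hpow
        rcases mul_eq_zero.mp hfac with h | h
        · exact absurd (by linear_combination -h) hne
        · exact h
      have hch : (j + 1 + 1).choose 2 = (j + 1).choose 2 + (j + 1) := by
        rw [Nat.choose_succ_succ (j + 1) 1, Nat.choose_one_right]
        exact Nat.add_comm _ _
      have hih := ih (by omega)
      rw [hch, pow_add, pow_succ]
      calc bj1 * (ζ ^ ((j + 1).choose 2) * ζ ^ (j + 1))
          = (ζ ^ (j + 1) * bj1) * ζ ^ ((j + 1).choose 2) := by ring
        _ = -bj * ζ ^ ((j + 1).choose 2) := by rw [show ζ ^ (j + 1) * bj1 = -bj by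
              linear_combination hmain]
        _ = -((-1) ^ j) := by rw [← hih]; ring
        _ = (-1) ^ j * -1 := by ring
  have hk' := key k hk
  simp only [map_sub, map_mul, map_pow, aeval_X, map_neg, map_one]
  rw [hk']
  ring
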